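/- Let n ≥ 1, let A ∈ ℝ^{n×n} be a left stochastic matrix, and let γ ∈ [0,1). Then the steady state x* = ((1−γ)/n)·(I_n − γ·A)^{-1}·𝟙 lies in the probability simplex Δ. -/

import Mathlib

open Matrix

section Aux

attribute [local instance] Matrix.linftyOpNormedRing Matrix.linftyOpNormedAlgebra

variable {n : ℕ}

lemma entry_norm_le (M : Matrix (Fin n) (Fin n) ℝ) (i j : Fin n) : ‖M i j‖ ≤ ‖M‖ := by
  rw [← coe_nnnorm, ← coe_nnnorm, NNReal.coe_le_coe, Matrix.linfty_opNNNorm_def]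
  calc ‖M i j‖₊ ≤ ∑ j', ‖M i j'‖₊ :=
        Finset.single_le_sum (f := fun j' => ‖M i j'‖₊) (fun _ _ => zero_le)
          (Finset.mem_univ j)
    _ ≤ Finset.univ.sup (fun i => ∑ j', ‖M i j'‖₊) := Finset.le_sup (f := fun i => ∑ j', ‖M i j'‖₊) (Finset.mem_univ i)

noncomputable def entryCLM (i j : Fin n) : Matrix (Fin n) (Fin n) ℝ →L[ℝ] ℝ :=
  LinearMap.mkContinuous
    { toFun := fun M => M i j, map_add' := fun _ _ => rfl, map_smul' := fun _ _ => rfl }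
    1 (fun M => by rw [one_mul]; exact entry_norm_le M i j)

lemma inv_one_sub_nonneg (M : Matrix (Fin n) (Fin n) ℝ)
    (h0 : ∀ i j, 0 ≤ M i j) (hs : ∀ i, ∑ j, M i j < 1) :
    IsUnit (1 - M) ∧ ∀ i j, 0 ≤ (1 - M)⁻¹ i j := by
  have hM : ‖M‖ < 1 := by
    rw [← coe_nnnorm, ← NNReal.coe_one, NNReal.coe_lt_coe, Matrix.linfty_opNNNorm_def]
    refine Finset.sup_lt_iff (by norm_num) |>.2 fun i _ => ?_
    rw [← NNReal.coe_lt_coe]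
    push_cast
    calc ∑ j, ‖M i j‖ = ∑ j, M i j := by
          exact Finset.sum_congr rfl fun j _ => Real.norm_of_nonneg (h0 i j)
      _ < 1 := hs i
  have hu : IsUnit (1 - M) := (Units.oneSub M hM).isUnit
  refine ⟨hu, fun i j => ?_⟩
  have hsum : Summable (fun k => M ^ k) := summable_geometric_of_norm_lt_one hM
  have hinv : (1 - M)⁻¹ = ∑' k, M ^ k := by
    rw [Matrix.nonsing_inv_eq_ringInverse, NormedRing.inverse_one_sub M hM]
    rfl
  have hpow : ∀ k, ∀ i j, 0 ≤ (M ^ k) i j := by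
    intro k
    induction k with
    | zero =>
      intro i j
      rw [pow_zero]
      by_cases h : i = j <;> simp [Matrix.one_apply, h]
    | succ k ih =>
      intro i j
      rw [pow_succ, Matrix.mul_apply]
      exact Finset.sum_nonneg fun l _ => mul_nonneg (ih i l) (h0 l j)
  have : (1 - M)⁻¹ i j = ∑' k, (M ^ k) i j := by
    rw [hinv]
    exact ContinuousLinearMap.map_tsum (entryCLM i j) hsum
  rw [this]
  exact tsum_nonneg fun k => hpow k i j

end Aux

/-- A square real matrix is left stochastic if each of its columns lies in the
probability simplex (entries nonnegative, columns summing to 1). -/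
def LeftStochastic {n : ℕ} (M : Matrix (Fin n) (Fin n) ℝ) : Prop :=
  ∀ j, (fun i => M i j) ∈ stdSimplex ℝ (Fin n)

theorem stmt_7 (n : ℕ) (hn : 1 ≤ n) (A : Matrix (Fin n) (Fin n) ℝ)
    (hA : LeftStochastic A) (γ : ℝ) (hγ : γ ∈ Set.Ico (0:ℝ) 1) :
    ((1 - γ) / n) • ((((1 : Matrix (Fin n) (Fin n) ℝ) - γ • A)⁻¹) *ᵥ fun _ => (1:ℝ))
      ∈ stdSimplex ℝ (Fin n) := by
  obtain ⟨hγ0, hγ1⟩ := hγ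
  set B : Matrix (Fin n) (Fin n) ℝ := 1 - γ • A with hB
  -- apply the aux lemma to the transpose
  have hM0 : ∀ i j, 0 ≤ (γ • Aᵀ) i j := fun i j =>
    mul_nonneg hγ0 ((hA i).1 j)
  have hMs : ∀ i, ∑ j, (γ • Aᵀ) i j < 1 := by
    intro i
    have : ∑ j, (γ • Aᵀ) i j = γ * ∑ j, A j i := by
      simp [Matrix.smul_apply, Matrix.transpose_apply, Finset.mul_sum]
    rw [this, (hA i).2, mul_one]
    exact hγ1
  obtain ⟨huT, hnnT⟩ := inv_one_sub_nonneg (γ • Aᵀ) hM0 hMs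
  have hBT : Bᵀ = 1 - γ • Aᵀ := by
    rw [hB, Matrix.transpose_sub, Matrix.transpose_one, Matrix.transpose_smul]
  have huB : IsUnit B := by
    rw [Matrix.isUnit_iff_isUnit_det, ← Matrix.det_transpose, hBT,
      ← Matrix.isUnit_iff_isUnit_det]
    exact huT
  have hBinv_nonneg : ∀ i j, 0 ≤ B⁻¹ i j := by
    intro i j
    have : B⁻¹ i j = (Bᵀ)⁻¹ j i := by
      rw [← Matrix.transpose_nonsing_inv]; rfl
    rw [this, hBT]
    exact hnnT j i
  -- column sums of B are 1 - γ
  have hv : (fun _ => (1:ℝ)) ᵥ* B = fun _ => (1 - γ) := by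
    funext j
    simp only [hB, Matrix.vecMul, dotProduct, Matrix.sub_apply, Matrix.smul_apply,
      Matrix.one_apply, smul_eq_mul, one_mul]
    rw [Finset.sum_sub_distrib, ← Finset.mul_sum, (hA j).2, mul_one]
    simp
  have hvinv : (1 - γ) • ((fun _ => (1:ℝ)) ᵥ* B⁻¹) = fun _ => (1:ℝ) := by
    have h1 : ((fun _ => (1:ℝ)) ᵥ* B) ᵥ* B⁻¹ = fun _ => (1:ℝ) := by
      rw [Matrix.vecMul_vecMul, Matrix.mul_nonsing_inv _ (Matrix.isUnit_iff_isUnit_det _ |>.1 huB),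
        Matrix.vecMul_one]
    conv_rhs => rw [← h1, hv]
    show (1 - γ) • ((fun _ => (1:ℝ)) ᵥ* B⁻¹) = (fun _ => ((1:ℝ) - γ)) ᵥ* B⁻¹
    funext j
    simp only [Pi.smul_apply, Matrix.vecMul, dotProduct, smul_eq_mul, one_mul,
      Finset.mul_sum]
  constructor
  · intro i
    simp only [Pi.smul_apply, smul_eq_mul]
    refine mul_nonneg (div_nonneg (by linarith) (Nat.cast_nonneg n)) ?_
    rw [Matrix.mulVec]
    exact Finset.sum_nonneg fun j _ => by
      simpa using mul_nonneg (hBinv_nonneg i j) zero_le_one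
  · have hsum : ∑ i, (B⁻¹ *ᵥ fun _ => (1:ℝ)) i = ∑ j, ((fun _ => (1:ℝ)) ᵥ* B⁻¹) j := by
      simp only [Matrix.mulVec, Matrix.vecMul, dotProduct, mul_one, one_mul]
      exact Finset.sum_comm
    have h2 : (1 - γ) * ∑ j, ((fun _ => (1:ℝ)) ᵥ* B⁻¹) j = n := by
      have h3 := congrArg (fun v : Fin n → ℝ => ∑ j, v j) hvinv
      simpa [← Finset.mul_sum] using h3
    have hnne : (n:ℝ) ≠ 0 := by positivity
    simp only [Pi.smul_apply, smul_eq_mul]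
    rw [← Finset.mul_sum, hsum, div_mul_eq_mul_div, h2, div_self hnne]
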